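/- Let ξ : [0,∞) → ℝ be continuous with ξ(0) = 0, 0 < ξ(r) < 1 for r > 0, ξ nondecreasing, and lim_{r→∞} ξ(r) = a with 0 < a < 1. Let h(r) = exp(−∫₀^r ξ(s)/s ds) (assuming ∫₀^1 ξ(s)/s ds < ∞). Then lim_{r→∞} h(r) = 0, lim_{r→∞} ∫₀^r h(s) ds = ∞, and lim_{r→∞} (r·h(r)) / (∫₀^r h(s) ds) = 1 − a. -/

import Mathlib

open Real Filter MeasureTheory intervalIntegral

/-- asymptotics of `h(r) = exp(−∫₀^r ξ(s)/s ds)` when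
`ξ ↗ a ∈ (0,1)`: `h → 0`, `∫₀^r h → ∞`, and `r h / ∫₀^r h → 1 − a`. -/
theorem stmt_6 (ξ : ℝ → ℝ) (hcont : ContinuousOn ξ (Set.Ici 0))
    (hξ0 : ξ 0 = 0) (hξ : ∀ r > 0, 0 < ξ r ∧ ξ r < 1)
    (hmono : Monotone ξ)
    (a : ℝ) (ha : 0 < a) (ha1 : a < 1)
    (hlim : Tendsto ξ atTop (nhds a))
    (hint : IntervalIntegrable (fun s => ξ s / s) MeasureTheory.volume 0 1)
    (h : ℝ → ℝ)
    (hh : ∀ r, h r = Real.exp (-(∫ s in (0:ℝ)..r, ξ s / s))) :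
    Tendsto h atTop (nhds 0)
    ∧ Tendsto (fun r => ∫ s in (0:ℝ)..r, h s) atTop atTop
    ∧ Tendsto (fun r => r * h r / ∫ s in (0:ℝ)..r, h s) atTop (nhds (1 - a)) := by
  set F : ℝ → ℝ := fun r => ∫ s in (0:ℝ)..r, ξ s / s with hFdef
  have hhF : ∀ r, h r = Real.exp (-(F r)) := hh
  have hξnn : ∀ s : ℝ, 0 ≤ s → 0 ≤ ξ s := by
    intro s hs
    rcases eq_or_lt_of_le hs with h0 | h0
    · simp [← h0, hξ0]
    · exact (hξ s h0).1.le
  have hξa : ∀ s, ξ s ≤ a := fun s =>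
    ge_of_tendsto hlim (eventually_atTop.2 ⟨s, fun t ht => hmono ht⟩)
  have hgnn : ∀ s : ℝ, 0 ≤ s → 0 ≤ ξ s / s := fun s hs => div_nonneg (hξnn s hs) hs
  have hgcontAt : ∀ s : ℝ, 0 < s → ContinuousAt (fun u => ξ u / u) s := by
    intro s hs
    have h1 : ContinuousAt ξ s := (hcont s hs.le).continuousAt (Ici_mem_nhds hs)
    exact h1.div continuousAt_id hs.ne'
  have hgint : ∀ r : ℝ, 0 ≤ r → IntervalIntegrable (fun s => ξ s / s) volume 0 r := by
    intro r hr
    rcases le_total r 1 with h1 | h1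
    · refine hint.mono_set ?_
      rw [Set.uIcc_of_le hr, Set.uIcc_of_le zero_le_one]
      exact Set.Icc_subset_Icc_right h1
    · refine hint.trans ?_
      apply ContinuousOn.intervalIntegrable
      intro x hx
      rw [Set.uIcc_of_le h1] at hx
      exact (hgcontAt x (lt_of_lt_of_le zero_lt_one hx.1)).continuousWithinAt
  have hFr : ∀ r, F r = ∫ s in (0:ℝ)..r, ξ s / s := fun r => rfl
  have hFadd : ∀ r1 r2 : ℝ, 0 ≤ r1 → 0 ≤ r2 →
      F r2 - F r1 = ∫ s in r1..r2, ξ s / s := by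
    intro r1 r2 h1 h2
    have := intervalIntegral.integral_add_adjacent_intervals (hgint r1 h1)
      ((hgint r1 h1).symm.trans (hgint r2 h2))
    rw [hFr, hFr]
    linarith
  have hFmono : ∀ r1 r2 : ℝ, 0 ≤ r1 → r1 ≤ r2 → F r1 ≤ F r2 := by
    intro r1 r2 h1 h12
    have h2 : 0 ≤ r2 := h1.trans h12
    have heq := hFadd r1 r2 h1 h2
    have hnn : 0 ≤ ∫ s in r1..r2, ξ s / s :=
      intervalIntegral.integral_nonneg h12 (fun u hu => hgnn u (h1.trans hu.1))
    linarith
  have hpos : ∀ r, 0 < h r := fun r => by rw [hhF r]; exact Real.exp_pos _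
  have hanti : AntitoneOn h (Set.Ici 0) := by
    intro r1 h1 r2 h2 h12
    rw [hhF, hhF]
    exact Real.exp_le_exp.2 (neg_le_neg (hFmono r1 r2 h1 h12))
  have hhint : ∀ r1 r2 : ℝ, 0 ≤ r1 → 0 ≤ r2 → IntervalIntegrable h volume r1 r2 := by
    intro r1 r2 h1 h2
    apply AntitoneOn.intervalIntegrable
    apply hanti.mono
    intro x hx
    rw [Set.uIcc] at hx
    exact le_trans (le_min h1 h2) hx.1
  -- comparison of F with logs
  have hloglb : ∀ (c r : ℝ), 0 ≤ c → 1 ≤ r → (∀ x ∈ Set.Icc 1 r, c ≤ ξ x) →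
      c * Real.log r ≤ ∫ s in (1:ℝ)..r, ξ s / s := by
    intro c r hc hr hcx
    have hrr : (0:ℝ) ≤ r := zero_le_one.trans hr
    have hci : IntervalIntegrable (fun s => c * (1/s)) volume 1 r := by
      apply ContinuousOn.intervalIntegrable
      apply continuousOn_const.mul
      intro x hx
      rw [Set.uIcc_of_le hr] at hx
      exact ((continuousAt_const.div continuousAt_id
        (lt_of_lt_of_le zero_lt_one hx.1).ne')).continuousWithinAt
    have hmon : (∫ s in (1:ℝ)..r, c * (1/s)) ≤ ∫ s in (1:ℝ)..r, ξ s / s := by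
      apply intervalIntegral.integral_mono_on hr hci
        ((hgint 1 zero_le_one).symm.trans (hgint r hrr))
      intro x hx
      rw [mul_one_div]
      have hx0 : 0 < x := lt_of_lt_of_le zero_lt_one hx.1
      gcongr
      exact hcx x hx
    have hval : (∫ s in (1:ℝ)..r, c * (1/s)) = c * Real.log r := by
      rw [intervalIntegral.integral_const_mul, integral_one_div_of_pos zero_lt_one
        (lt_of_lt_of_le zero_lt_one hr), div_one]
    linarith
  -- Part 1
  have hξ1 : 0 < ξ 1 := (hξ 1 one_pos).1
  have hFtop : Tendsto F atTop atTop := by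
    have hlb : ∀ r : ℝ, 1 ≤ r → F 1 + ξ 1 * Real.log r ≤ F r := by
      intro r hr
      have := hloglb (ξ 1) r hξ1.le hr (fun x hx => hmono hx.1)
      have heq := hFadd 1 r zero_le_one (zero_le_one.trans hr)
      linarith
    apply tendsto_atTop_mono' atTop (eventually_atTop.2 ⟨1, hlb⟩)
    exact tendsto_atTop_add_const_left _ _ (tendsto_log_atTop.const_mul_atTop hξ1)
  have part1 : Tendsto h atTop (nhds 0) := by
    have : Tendsto (fun r => Real.exp (-(F r))) atTop (nhds 0) :=
      Real.tendsto_exp_atBot.comp (tendsto_neg_atTop_atBot.comp hFtop)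
    exact this.congr (fun r => (hhF r).symm)
  -- Part 2
  have hDadd : ∀ r1 r2 : ℝ, 0 ≤ r1 → 0 ≤ r2 →
      (∫ s in (0:ℝ)..r2, h s) - (∫ s in (0:ℝ)..r1, h s) = ∫ s in r1..r2, h s := by
    intro r1 r2 h1 h2
    have := intervalIntegral.integral_add_adjacent_intervals (hhint 0 r1 le_rfl h1)
      (hhint r1 r2 h1 h2)
    linarith
  have hhlb : ∀ s : ℝ, 1 ≤ s → h 1 * s ^ (-a) ≤ h s := by
    intro s hs
    have hs0 : 0 < s := zero_lt_one.trans_le hs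
    have hFs : F s ≤ F 1 + a * Real.log s := by
      have heq := hFadd 1 s zero_le_one hs0.le
      have hub : (∫ u in (1:ℝ)..s, ξ u / u) ≤ a * Real.log s := by
        have hai : IntervalIntegrable (fun u => a * (1/u)) volume 1 s := by
          apply ContinuousOn.intervalIntegrable
          apply continuousOn_const.mul
          intro x hx
          rw [Set.uIcc_of_le hs] at hx
          exact ((continuousAt_const.div continuousAt_id
            (lt_of_lt_of_le zero_lt_one hx.1).ne')).continuousWithinAt
        have hmon : (∫ u in (1:ℝ)..s, ξ u / u) ≤ ∫ u in (1:ℝ)..s, a * (1/u) := by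
          apply intervalIntegral.integral_mono_on hs
            ((hgint 1 zero_le_one).symm.trans (hgint s hs0.le)) hai
          intro x hx
          rw [mul_one_div]
          gcongr
          · exact (lt_of_lt_of_le zero_lt_one hx.1).le
          · exact hξa x
        have hval : (∫ u in (1:ℝ)..s, a * (1/u)) = a * Real.log s := by
          rw [intervalIntegral.integral_const_mul, integral_one_div_of_pos zero_lt_one hs0,
            div_one]
        linarith
      linarith
    rw [hhF s, hhF 1, Real.rpow_def_of_pos hs0, ← Real.exp_add]
    apply Real.exp_le_exp.2
    nlinarith [hFs]
  have hDtop : Tendsto (fun r => ∫ s in (0:ℝ)..r, h s) atTop atTop := by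
    have hDlb : ∀ r : ℝ, 1 ≤ r →
        h 1 * ((r ^ (1 - a) - 1) / (1 - a)) ≤ ∫ s in (0:ℝ)..r, h s := by
      intro r hr
      have h0r : (0:ℝ) ≤ r := zero_le_one.trans hr
      have h01 : (0:ℝ) ≤ ∫ s in (0:ℝ)..1, h s :=
        intervalIntegral.integral_nonneg zero_le_one (fun u _ => (hpos u).le)
      have hri : IntervalIntegrable (fun s : ℝ => h 1 * s ^ (-a)) volume 1 r := by
        apply ContinuousOn.intervalIntegrable
        apply continuousOn_const.mul
        intro x hx
        rw [Set.uIcc_of_le hr] at hx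
        exact (Real.continuousAt_rpow_const x (-a)
          (Or.inl (lt_of_lt_of_le zero_lt_one hx.1).ne')).continuousWithinAt
      have hseg : (∫ s in (1:ℝ)..r, h 1 * s ^ (-a)) ≤ ∫ s in (1:ℝ)..r, h s := by
        apply intervalIntegral.integral_mono_on hr hri (hhint 1 r zero_le_one h0r)
        exact fun x hx => hhlb x hx.1
      have hval : (∫ s in (1:ℝ)..r, h 1 * s ^ (-a))
          = h 1 * ((r ^ (1 - a) - 1) / (1 - a)) := by
        rw [intervalIntegral.integral_const_mul,
          integral_rpow (Or.inl (by linarith : (-1:ℝ) < -a)),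
          show -a + 1 = 1 - a by ring, Real.one_rpow]
      have hDD := hDadd 1 r zero_le_one h0r
      linarith
    apply tendsto_atTop_mono' atTop (eventually_atTop.2 ⟨1, hDlb⟩)
    have h1 : Tendsto (fun r : ℝ => r ^ (1 - a)) atTop atTop :=
      tendsto_rpow_atTop (by linarith)
    have h2 : Tendsto (fun r : ℝ => (r ^ (1 - a) - 1) / (1 - a)) atTop atTop := by
      apply Tendsto.atTop_div_const (by linarith : (0:ℝ) < 1 - a)
      exact tendsto_atTop_add_const_right _ (-1) h1 |>.congr (fun x => by ring)
    exact h2.const_mul_atTop (hpos 1)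
  -- Part 3
  have hFderiv : ∀ s : ℝ, 0 < s → HasDerivAt F (ξ s / s) s := by
    intro s hs
    exact intervalIntegral.integral_hasDerivAt_right (hgint s hs.le)
      (ContinuousAt.stronglyMeasurableAtFilter isOpen_Ioi
        (fun x hx => hgcontAt x hx) s hs)
      (hgcontAt s hs)
  have hhderiv : ∀ s : ℝ, 0 < s →
      HasDerivAt h (Real.exp (-(F s)) * -(ξ s / s)) s := by
    intro s hs
    have := ((hFderiv s hs).neg).exp
    exact this.congr_of_eventuallyEq (Filter.Eventually.of_forall hhF)
  have hcontAth : ∀ x : ℝ, 0 < x → ContinuousAt h x := fun x hx =>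
    (hhderiv x hx).continuousAt
  have hNderiv : ∀ s : ℝ, 0 < s →
      HasDerivAt (fun r => r * h r) ((1 - ξ s) * h s) s := by
    intro s hs
    have := (hasDerivAt_id' s).mul (hhderiv s hs)
    refine this.congr_deriv ?_
    rw [← hhF s]
    field_simp
    ring
  have hIcont : ∀ r0 r : ℝ, 0 < r0 → r0 ≤ r →
      IntervalIntegrable (fun s => (1 - ξ s) * h s) volume r0 r := by
    intro r0 r h0 h2
    apply ContinuousOn.intervalIntegrable
    intro x hx
    rw [Set.uIcc_of_le h2] at hx
    have hx0 : 0 < x := lt_of_lt_of_le h0 hx.1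
    exact ((continuousAt_const.sub
      ((hcont x hx0.le).continuousAt (Ici_mem_nhds hx0))).mul
      (hcontAth x hx0)).continuousWithinAt
  have hFTC : ∀ r0 r : ℝ, 1 ≤ r0 → r0 ≤ r →
      r * h r - r0 * h r0 = ∫ s in r0..r, (1 - ξ s) * h s := by
    intro r0 r h1 h2
    symm
    apply intervalIntegral.integral_eq_sub_of_hasDerivAt
    · intro x hx
      rw [Set.uIcc_of_le h2] at hx
      exact hNderiv x (lt_of_lt_of_le (zero_lt_one.trans_le h1) hx.1)
    · exact hIcont r0 r (zero_lt_one.trans_le h1) h2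
  refine ⟨part1, hDtop, ?_⟩
  rw [Metric.tendsto_nhds]
  intro ε hε
  obtain ⟨r0, hr01, hr0ξ⟩ : ∃ r0 : ℝ, 1 ≤ r0 ∧ a - ε / 2 < ξ r0 := by
    have h1 := hlim.eventually (eventually_gt_nhds (by linarith : a - ε / 2 < a))
    obtain ⟨r0, hr0⟩ := (h1.and (eventually_ge_atTop 1)).exists
    exact ⟨r0, hr0.2, hr0.1⟩
  have hr00 : (0:ℝ) ≤ r0 := zero_le_one.trans hr01
  set N0 : ℝ := r0 * h r0 with hN0def
  set D0 : ℝ := ∫ s in (0:ℝ)..r0, h s with hD0def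
  have hN0 : 0 ≤ N0 := mul_nonneg hr00 (hpos r0).le
  have hD0 : 0 ≤ D0 :=
    intervalIntegral.integral_nonneg hr00 (fun u _ => (hpos u).le)
  have hev := hDtop.eventually_gt_atTop
    (max (max 0 (N0 / (ε / 2))) (D0 / (ε / 2)))
  filter_upwards [hev, eventually_ge_atTop r0] with r hDr hrr
  set Dr : ℝ := ∫ s in (0:ℝ)..r, h s with hDrdef
  have hDrpos : 0 < Dr :=
    lt_of_le_of_lt (le_max_of_le_left (le_max_left _ _)) hDr
  have hN0Dr : N0 / Dr < ε / 2 := by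
    rw [div_lt_iff₀ hDrpos]
    have h1 : N0 / (ε / 2) < Dr := lt_of_le_of_lt (le_max_of_le_left (le_max_right _ _)) hDr
    rw [div_lt_iff₀ (by linarith : (0:ℝ) < ε / 2)] at h1
    linarith
  have hD0Dr : D0 / Dr < ε / 2 := by
    rw [div_lt_iff₀ hDrpos]
    have h1 : D0 / (ε / 2) < Dr := lt_of_le_of_lt (le_max_right _ _) hDr
    rw [div_lt_iff₀ (by linarith : (0:ℝ) < ε / 2)] at h1
    linarith
  have hseg := hFTC r0 r hr01 hrr
  have hDD : Dr - D0 = ∫ s in r0..r, h s := hDadd r0 r hr00 (hr00.trans hrr)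
  have hIge : (0:ℝ) ≤ Dr - D0 := by
    rw [hDD]
    exact intervalIntegral.integral_nonneg hrr (fun u _ => (hpos u).le)
  have hhintr : IntervalIntegrable h volume r0 r := hhint r0 r hr00 (hr00.trans hrr)
  have hlow : (1 - a) * (Dr - D0) ≤ ∫ s in r0..r, (1 - ξ s) * h s := by
    rw [hDD, ← intervalIntegral.integral_const_mul]
    apply intervalIntegral.integral_mono_on hrr (hhintr.const_mul _)
      (hIcont r0 r (zero_lt_one.trans_le hr01) hrr)
    intro x hx
    exact mul_le_mul_of_nonneg_right (by linarith [hξa x]) (hpos x).le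
  have hhigh : (∫ s in r0..r, (1 - ξ s) * h s) ≤ (1 - ξ r0) * (Dr - D0) := by
    rw [hDD, ← intervalIntegral.integral_const_mul]
    apply intervalIntegral.integral_mono_on hrr
      (hIcont r0 r (zero_lt_one.trans_le hr01) hrr) (hhintr.const_mul _)
    intro x hx
    exact mul_le_mul_of_nonneg_right (by linarith [hmono hx.1]) (hpos x).le
  have hNup : r * h r ≤ (1 - a + ε / 2) * Dr + N0 := by
    have hc : 1 - ξ r0 ≤ 1 - a + ε / 2 := by linarith
    have e3 : (1 - ξ r0) * (Dr - D0) ≤ (1 - a + ε / 2) * (Dr - D0) :=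
      mul_le_mul_of_nonneg_right hc hIge
    have e4 : (1 - a + ε / 2) * (Dr - D0) ≤ (1 - a + ε / 2) * Dr := by
      apply mul_le_mul_of_nonneg_left (by linarith) (by linarith)
    linarith
  have hNlo : (1 - a) * Dr - D0 ≤ r * h r := by
    have e1 : (1 - a) * D0 ≤ D0 := by nlinarith
    nlinarith
  rw [Real.dist_eq, abs_lt]
  constructor
  · have hd1 : ((1 - a) * Dr - D0) / Dr ≤ r * h r / Dr :=
      (div_le_div_iff_of_pos_right hDrpos).2 hNlo
    rw [sub_div, mul_div_cancel_right₀ _ hDrpos.ne'] at hd1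
    linarith
  · have hd2 : r * h r / Dr ≤ ((1 - a + ε / 2) * Dr + N0) / Dr :=
      (div_le_div_iff_of_pos_right hDrpos).2 hNup
    rw [add_div, mul_div_cancel_right₀ _ hDrpos.ne'] at hd2
    linarith
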